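/- Let G be a graph with n vertices and let P be a clique partition of G in which all cliques have size at most s (with s ≥ 1). Then the weight ∏_{C ∈ P} (|C| + 1) is at least (s+1)^{⌊n/s⌋} · ((n mod s) + 1). -/

import Mathlib

/-- `P` is a partition of the vertex set of `G` into cliques. -/
def IsCliquePartition {V : Type*} [DecidableEq V] (G : SimpleGraph V)
    (P : Finset (Finset V)) : Prop :=
  (∀ C ∈ P, G.IsClique (C : Set V)) ∧ (∀ v : V, ∃! C, C ∈ P ∧ v ∈ C)

private lemma step_lemma (s a m : ℕ) (hs : 1 ≤ s) (ha : a ≤ s) :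
    (s + 1) ^ ((a + m) / s) * ((a + m) % s + 1)
      ≤ (a + 1) * ((s + 1) ^ (m / s) * (m % s + 1)) := by
  have hr : m % s < s := Nat.mod_lt _ hs
  set q := m / s with hq
  set r := m % s with hrdef
  have hm : m = s * q + r := (Nat.div_add_mod m s).symm
  by_cases h : a + r < s
  · have hdiv : (a + m) / s = q := by
      rw [hm, ← Nat.add_assoc, Nat.add_comm a (s * q), Nat.add_assoc,
        Nat.mul_add_div hs, Nat.div_eq_of_lt h, Nat.add_zero]
    have hmod : (a + m) % s = a + r := by
      rw [hm, ← Nat.add_assoc, Nat.add_comm a (s * q), Nat.add_assoc,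
        Nat.mul_add_mod, Nat.mod_eq_of_lt h]
    rw [hdiv, hmod, Nat.mul_comm (a+1), Nat.mul_assoc]
    refine Nat.mul_le_mul_left _ ?_
    nlinarith [Nat.zero_le (r * a)]
  · push_neg at h
    have hb : a + r - s < s := by omega
    have hdiv : (a + m) / s = q + 1 := by
      have hsq : s * (q + 1) = s * q + s := by ring
      have : a + m = s * (q + 1) + (a + r - s) := by omega
      rw [this, Nat.mul_add_div hs, Nat.div_eq_of_lt hb, Nat.add_zero]
    have hmod : (a + m) % s = a + r - s := by
      have hsq : s * (q + 1) = s * q + s := by ring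
      have : a + m = s * (q + 1) + (a + r - s) := by omega
      rw [this, Nat.mul_add_mod, Nat.mod_eq_of_lt hb]
    rw [hdiv, hmod, pow_succ, Nat.mul_assoc, Nat.mul_comm (a+1), Nat.mul_assoc]
    refine Nat.mul_le_mul_left _ ?_
    set b := a + r - s with hbdef
    have hab : b + s = a + r := by omega
    have hbr : b ≤ r := by omega
    -- (s+1)*(b+1) ≤ (r+1)*(a+1) : difference is (r-b)*(s-r) ≥ 0
    zify [hbr, Nat.le_of_lt hr] at *
    nlinarith [mul_nonneg (show (0:ℤ) ≤ (r:ℤ) - b by omega)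
      (show (0:ℤ) ≤ (s:ℤ) - r by omega)]

private lemma prod_lemma {ι : Type*} [DecidableEq ι] (s : ℕ) (hs : 1 ≤ s)
    (t : Finset ι) (f : ι → ℕ) (hf : ∀ i ∈ t, f i ≤ s) :
    (s + 1) ^ ((∑ i ∈ t, f i) / s) * ((∑ i ∈ t, f i) % s + 1)
      ≤ ∏ i ∈ t, (f i + 1) := by
  induction t using Finset.cons_induction with
  | empty => simp
  | cons a t ha ih =>
    rw [Finset.sum_cons, Finset.prod_cons]
    calc (s + 1) ^ ((f a + ∑ i ∈ t, f i) / s) * ((f a + ∑ i ∈ t, f i) % s + 1)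
        ≤ (f a + 1) * ((s + 1) ^ ((∑ i ∈ t, f i) / s) * ((∑ i ∈ t, f i) % s + 1)) :=
          step_lemma s (f a) _ hs (hf a (Finset.mem_cons_self a t))
      _ ≤ (f a + 1) * ∏ i ∈ t, (f i + 1) :=
          Nat.mul_le_mul_left _ (ih fun i hi => hf i (Finset.mem_cons_of_mem hi))

theorem stmt_4 {V : Type*} [Fintype V] [DecidableEq V] (G : SimpleGraph V)
    (n s : ℕ) (hn : n = Fintype.card V) (hs : 1 ≤ s)
    (P : Finset (Finset V)) (hP : IsCliquePartition G P)
    (hsize : ∀ C ∈ P, C.card ≤ s) :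
    (s + 1) ^ (n / s) * (n % s + 1) ≤ ∏ C ∈ P, (C.card + 1) := by
  obtain ⟨-, hcover⟩ := hP
  have hdisj : ∀ C ∈ P, ∀ D ∈ P, C ≠ D → Disjoint C D := by
    intro C hC D hD hne
    rw [Finset.disjoint_left]
    intro v hvC hvD
    obtain ⟨E, -, hEuniq⟩ := hcover v
    exact hne ((hEuniq C ⟨hC, hvC⟩).trans (hEuniq D ⟨hD, hvD⟩).symm)
  have huniv : P.biUnion id = Finset.univ := by
    ext v
    simp only [Finset.mem_biUnion, id, Finset.mem_univ, iff_true]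
    obtain ⟨C, ⟨hC, hvC⟩, -⟩ := hcover v
    exact ⟨C, hC, hvC⟩
  have hsum : n = ∑ C ∈ P, C.card := by
    rw [hn, ← Finset.card_univ, ← huniv]
    exact Finset.card_biUnion hdisj
  rw [hsum]
  exact prod_lemma s hs P Finset.card hsize
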